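/- arXiv:0712.0069 — 3 statements merged into one kernel-verified Lean document; each statement's English description precedes it below -/
import Mathlib

section
/- Let the complex sequence z(s) satisfy, for every s, that z(s+1) and z(s−1) are the two roots of A₂(z(s))w² + A₁(z(s))w + A₀(z(s)) = 0, where A₀, A₁, A₂ ∈ ℂ[X] are polynomials with A₂ not identically zero, and suppose z takes infinitely many distinct values. Define W₁(x,y) = A₂(x)y² + A₁(x)y + A₀(x). Then W₁(x,y) and W₁(y,x), viewed as polynomials in two variables, have a nontrivial common factor (in particular, if W₁ is irreducible then W₁(x,y) = W₁(y,x), i.e., W₁ is symmetric). -/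
open MvPolynomial in
/-- View a one-variable polynomial as a polynomial in the variable `i` of a
two-variable polynomial ring. -/
noncomputable def liftVar (p : Polynomial ℂ) (i : Fin 2) :
    MvPolynomial (Fin 2) ℂ :=
  Polynomial.aeval (MvPolynomial.X i) p

/-- inner equiv : `MvPolynomial (Fin 1) ℂ ≃ₐ[ℂ] ℂ[X]`. -/
noncomputable def auxE1 : MvPolynomial (Fin 1) ℂ ≃ₐ[ℂ] Polynomial ℂ :=
  (MvPolynomial.finSuccEquiv ℂ 0).trans
    (Polynomial.mapAlgEquiv (MvPolynomial.isEmptyAlgEquiv ℂ (Fin 0)))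

/-- Full equivalence `ℂ[x,y] ≃ ℂ[x][y]`, with `X 0 ↦ C X` (inner variable)
and `X 1 ↦ X` (outer variable). -/
noncomputable def auxE2 : MvPolynomial (Fin 2) ℂ ≃ₐ[ℂ] Polynomial (Polynomial ℂ) :=
  (MvPolynomial.renameEquiv ℂ (Equiv.swap (0 : Fin 2) 1)).trans
    ((MvPolynomial.finSuccEquiv ℂ 1).trans (Polynomial.mapAlgEquiv auxE1))

lemma auxE2_X0 : auxE2 (MvPolynomial.X 0) = Polynomial.C Polynomial.X := by
  simp [auxE2, auxE1, MvPolynomial.renameEquiv_apply]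
  rw [show (1 : Fin 2) = Fin.succ 0 by rfl, MvPolynomial.finSuccEquiv_X_succ]
  simp [MvPolynomial.finSuccEquiv_X_zero]

lemma auxE2_X1 : auxE2 (MvPolynomial.X 1) = Polynomial.X := by
  simp [auxE2, auxE1, MvPolynomial.renameEquiv_apply, MvPolynomial.finSuccEquiv_X_zero]

lemma auxE2_C (c : ℂ) : auxE2 (MvPolynomial.C c) = Polynomial.C (Polynomial.C c) := by
  have : (MvPolynomial.C c : MvPolynomial (Fin 2) ℂ) = algebraMap ℂ _ c := rfl
  rw [this, AlgEquiv.commutes]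
  rfl

/-- Evaluation of a `ℂ[x][y]` polynomial: inner variable at `a`, outer at `b`. -/
noncomputable def auxEv (a b : ℂ) : Polynomial (Polynomial ℂ) →+* ℂ :=
  (Polynomial.evalRingHom b).comp (Polynomial.mapRingHom (Polynomial.evalRingHom a))

lemma auxEv_auxE2 (a b : ℂ) (W : MvPolynomial (Fin 2) ℂ) :
    auxEv a b (auxE2 W) = MvPolynomial.eval ![a, b] W := by
  have h : (auxEv a b).comp
      (auxE2 : MvPolynomial (Fin 2) ℂ →+* Polynomial (Polynomial ℂ))
      = MvPolynomial.eval ![a, b] := by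
    apply MvPolynomial.ringHom_ext
    · intro r
      simp [auxEv, auxE2_C]
    · intro i
      fin_cases i
      · simp [auxEv, auxE2_X0]
      · simp [auxEv, auxE2_X1]
  exact congrFun (congrArg (fun h => h.toFun) h) W

lemma auxE2_liftVar0 (A : Polynomial ℂ) : auxE2 (liftVar A 0) = Polynomial.C A := by
  unfold liftVar
  rw [← Polynomial.aeval_algHom_apply auxE2 (MvPolynomial.X 0) A, auxE2_X0]
  rw [show (Polynomial.C (Polynomial.X : Polynomial ℂ))
      = Polynomial.CAlgHom (R := ℂ) (Polynomial.X : Polynomial ℂ) from rfl]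
  rw [Polynomial.aeval_algHom_apply, Polynomial.aeval_X_left_apply]
  rfl

lemma eval_liftVar (A : Polynomial ℂ) (v : Fin 2 → ℂ) (i : Fin 2) :
    MvPolynomial.eval v (liftVar A i) = A.eval (v i) :=
  calc MvPolynomial.eval v (liftVar A i)
      = MvPolynomial.aeval v (Polynomial.aeval (MvPolynomial.X i) A) := rfl
    _ = Polynomial.aeval (MvPolynomial.aeval v (MvPolynomial.X i)) A :=
        (Polynomial.aeval_algHom_apply _ _ _).symm
    _ = Polynomial.aeval (v i) A := by rw [MvPolynomial.aeval_X]
    _ = A.eval (v i) := by rw [Polynomial.coe_aeval_eq_eval]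

open Classical in
/-- Core lemma: two nonzero polynomials in `ℂ[x][y]` vanishing at infinitely many
points with pairwise distinct `x`-coordinates have a nontrivial common factor. -/
lemma auxCore (f g : Polynomial (Polynomial ℂ)) (hf : f ≠ 0) (hg : g ≠ 0)
    (x y : ℤ → ℂ) (hx : Function.Injective x)
    (hev : ∀ s : ℤ, auxEv (x s) (y s) f = 0 ∧ auxEv (x s) (y s) g = 0) :
    ∃ h : Polynomial (Polynomial ℂ), ¬ IsUnit h ∧ h ≠ 0 ∧ h ∣ f ∧ h ∣ g := by
  set R := Polynomial ℂ
  set K := FractionRing (Polynomial ℂ)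
  set φ : R →+* K := algebraMap R K with hφ
  have hinj : Function.Injective φ := IsFractionRing.injective _ _
  have hmapinj : Function.Injective (Polynomial.map φ) :=
    Polynomial.map_injective φ hinj
  have hsmul : ∀ (b : R) (p : Polynomial K), (b • p) = Polynomial.C (φ b) * p := by
    intro b p
    rw [Algebra.smul_def, Polynomial.algebraMap_apply]
  set f' : Polynomial K := f.map φ with hf'def
  set g' : Polynomial K := g.map φ with hg'def
  have hf' : f' ≠ 0 := fun h => hf (hmapinj (by simpa using h))
  have hg' : g' ≠ 0 := fun h => hg (hmapinj (by simpa using h))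
  by_cases hco : IsCoprime f' g'
  · -- Bezout, clear denominators, contradiction with infinitely many roots
    exfalso
    obtain ⟨u, v, huv⟩ := hco
    obtain ⟨bu, hbu⟩ := IsLocalization.integerNormalization_map_to_map
      (nonZeroDivisors R) u
    obtain ⟨bv, hbv⟩ := IsLocalization.integerNormalization_map_to_map
      (nonZeroDivisors R) v
    set U := IsLocalization.integerNormalization (nonZeroDivisors R) u
    set V := IsLocalization.integerNormalization (nonZeroDivisors R) v
    set d : R := (bu : R) * (bv : R) with hd
    have hdne : d ≠ 0 := mul_ne_zero (nonZeroDivisors.coe_ne_zero bu)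
      (nonZeroDivisors.coe_ne_zero bv)
    have key : (Polynomial.C (bv : R) * U) * f + (Polynomial.C (bu : R) * V) * g
        = Polynomial.C d := by
      apply hmapinj
      rw [Polynomial.map_add, Polynomial.map_mul, Polynomial.map_mul,
        Polynomial.map_mul, Polynomial.map_mul, hbu, hbv, ← hf'def, ← hg'def,
        Polynomial.map_C, Polynomial.map_C, Polynomial.map_C, hsmul, hsmul, hd, map_mul,
        Polynomial.C_mul]
      linear_combination (Polynomial.C (φ (bv : R)) * Polynomial.C (φ (bu : R))) * huv
    have hroots : ∀ s : ℤ, d.eval (x s) = 0 := by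
      intro s
      have h1 : auxEv (x s) (y s)
            ((Polynomial.C (bv : R) * U) * f + (Polynomial.C (bu : R) * V) * g)
          = auxEv (x s) (y s) (Polynomial.C d) := by rw [key]
      simp only [map_add, map_mul, (hev s).1, (hev s).2, mul_zero, add_zero, zero_add] at h1
      have h2 : auxEv (x s) (y s) (Polynomial.C d) = d.eval (x s) := by
        simp [auxEv]
      rw [h2] at h1
      exact h1.symm
    apply hdne
    apply Polynomial.eq_zero_of_infinite_isRoot
    exact (Set.infinite_range_of_injective hx).mono
      (by rintro _ ⟨s, rfl⟩; exact hroots s)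
  · -- the gcd over the fraction field is a nonunit; use Gauss's lemma
    set d : Polynomial K := EuclideanDomain.gcd f' g' with hd
    have hdu : ¬ IsUnit d := fun h => hco (EuclideanDomain.gcd_isUnit_iff.mp h)
    have hdne : d ≠ 0 := fun h => hf' (EuclideanDomain.gcd_eq_zero_iff.mp h).1
    obtain ⟨b, hb⟩ := IsLocalization.integerNormalization_map_to_map
      (nonZeroDivisors R) d
    set D := IsLocalization.integerNormalization (nonZeroDivisors R) d with hD
    have hDne : D ≠ 0 := fun h => hdne
      ((IsFractionRing.integerNormalization_eq_zero_iff (A := R)).mp h)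
    have hbne : φ (b : R) ≠ 0 := fun h =>
      nonZeroDivisors.coe_ne_zero b (hinj (by simpa using h))
    have hbunit : IsUnit (Polynomial.C (φ (b : R))) :=
      Polynomial.isUnit_C.mpr (isUnit_iff_ne_zero.mpr hbne)
    have hmapD : D.map φ = Polynomial.C (φ (b : R)) * d := by rw [hb, hsmul]
    have key : ∀ p : Polynomial (Polynomial ℂ), p ≠ 0 → d ∣ p.map φ → D.primPart ∣ p := by
      intro p hp hdvd
      have hc : φ p.content ≠ 0 := fun h => hp (by
        have h2 : p.content = 0 := hinj (by rw [h, map_zero])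
        exact Polynomial.content_eq_zero_iff.mp h2)
      have hcunit : IsUnit (Polynomial.C (φ p.content)) :=
        Polynomial.isUnit_C.mpr (isUnit_iff_ne_zero.mpr hc)
      have h1 : D.primPart.map φ ∣ p.primPart.map φ := by
        have hDp : D.primPart.map φ ∣ D.map φ :=
          Polynomial.map_dvd φ D.primPart_dvd
        have h2 : D.map φ ∣ Polynomial.C (φ (b : R)) * p.map φ := by
          rw [hmapD]
          exact mul_dvd_mul_left _ hdvd
        have h3 : D.primPart.map φ ∣ Polynomial.C (φ (b : R)) * p.map φ :=
          hDp.trans h2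
        rw [hbunit.dvd_mul_left] at h3
        have h4 : p.map φ = Polynomial.C (φ p.content) * p.primPart.map φ := by
          conv_lhs => rw [p.eq_C_content_mul_primPart]
          rw [Polynomial.map_mul, Polynomial.map_C]
        rw [h4, hcunit.dvd_mul_left] at h3
        exact h3
      exact (D.isPrimitive_primPart.dvd_of_fraction_map_dvd_fraction_map
        (K := K) h1).trans p.primPart_dvd
    refine ⟨D.primPart, ?_, D.primPart_ne_zero, key f hf (EuclideanDomain.gcd_dvd_left _ _),
      key g hg (EuclideanDomain.gcd_dvd_right _ _)⟩
    intro hu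
    have h0 : D.primPart.degree = 0 := Polynomial.degree_eq_zero_of_isUnit hu
    have hDdeg : D.degree = d.degree := by
      rw [← Polynomial.degree_map_eq_of_injective hinj D, hmapD,
        Polynomial.degree_C_mul (by exact hbne)]
    have hdeg : d.degree = 0 := by
      have hcne : Polynomial.C D.content ≠ 0 := by
        simpa [Polynomial.content_eq_zero_iff] using hDne
      have h5 : D.degree = D.primPart.degree := by
        conv_lhs => rw [D.eq_C_content_mul_primPart]
        rw [Polynomial.degree_C_mul (fun h => hcne (by simpa using h))]
      rw [← hDdeg, h5, h0]
    exact hdu (Polynomial.isUnit_iff_degree_eq_zero.mpr hdeg)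

open MvPolynomial in
/-- If for every `s` both `z (s+1)` and `z (s-1)` are roots of
`A₂(z s) w² + A₁(z s) w + A₀(z s) = 0`, with `z` injective and `A₂ ≠ 0`, then
`W₁(x,y) = A₂(x)y² + A₁(x)y + A₀(x)` and `W₁(y,x)` have a nontrivial
(nonconstant, non-unit) common factor; in particular, if `W₁` is irreducible
then `W₁(x,y) = W₁(y,x)`, i.e. `W₁` is symmetric. -/
theorem stmt10 (z : ℤ → ℂ) (hz : Function.Injective z)
    (A₀ A₁ A₂ : Polynomial ℂ) (hA₂ : A₂ ≠ 0)
    (hroot : ∀ s : ℤ,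
      A₂.eval (z s) * z (s + 1) ^ 2 + A₁.eval (z s) * z (s + 1) + A₀.eval (z s) = 0 ∧
      A₂.eval (z s) * z (s - 1) ^ 2 + A₁.eval (z s) * z (s - 1) + A₀.eval (z s) = 0)
    (W₁ W₂ : MvPolynomial (Fin 2) ℂ)
    (hW₁ : W₁ = liftVar A₂ 0 * (X 1) ^ 2 + liftVar A₁ 0 * X 1 + liftVar A₀ 0)
    (hW₂ : W₂ = MvPolynomial.rename (Equiv.swap (0 : Fin 2) 1) W₁) :
    (∃ g : MvPolynomial (Fin 2) ℂ, ¬ IsUnit g ∧ g ≠ 0 ∧ g ∣ W₁ ∧ g ∣ W₂) ∧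
    (Irreducible W₁ → W₁ = W₂) := by
  -- evaluation of W₁
  have heval : ∀ a b : ℂ, MvPolynomial.eval ![a, b] W₁
      = A₂.eval a * b ^ 2 + A₁.eval a * b + A₀.eval a := by
    intro a b
    rw [hW₁]
    simp [eval_liftVar]
  -- evaluation of W₂
  have hswapvec : ∀ a b : ℂ, (![a, b] ∘ (Equiv.swap (0 : Fin 2) 1)) = ![b, a] := by
    intro a b
    funext i
    fin_cases i <;> simp [Equiv.swap_apply_left, Equiv.swap_apply_right]
  have heval₂ : ∀ a b : ℂ, MvPolynomial.eval ![a, b] W₂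
      = A₂.eval b * a ^ 2 + A₁.eval b * a + A₀.eval b := by
    intro a b
    rw [hW₂, MvPolynomial.eval_rename, hswapvec, heval]
  -- the image F of W₁ in ℂ[x][y]
  set F : Polynomial (Polynomial ℂ) := auxE2 W₁ with hF
  have hFform : F = Polynomial.C A₂ * Polynomial.X ^ 2 + Polynomial.C A₁ * Polynomial.X
      + Polynomial.C A₀ := by
    rw [hF, hW₁]
    rw [map_add, map_add, map_mul, map_mul, map_pow, auxE2_X1,
      auxE2_liftVar0, auxE2_liftVar0, auxE2_liftVar0]
  have hFcoeff2 : F.coeff 2 = A₂ := by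
    rw [hFform]
    simp [Polynomial.coeff_C_mul, Polynomial.coeff_X_pow, Polynomial.coeff_C,
      Polynomial.coeff_X]
  have hFne : F ≠ 0 := fun h => hA₂ (by rw [← hFcoeff2, h, Polynomial.coeff_zero])
  have hW₁ne : W₁ ≠ 0 := fun h => hFne (by rw [hF, h, map_zero])
  have hswapW₂ : MvPolynomial.rename (⇑(Equiv.swap (0 : Fin 2) 1)) W₂ = W₁ := by
    rw [hW₂, MvPolynomial.rename_rename]
    rw [show (⇑(Equiv.swap (0 : Fin 2) 1) ∘ ⇑(Equiv.swap (0 : Fin 2) 1)) = id by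
      funext i; simp [Equiv.swap_apply_self]]
    exact MvPolynomial.rename_id_apply W₁
  have hW₂ne : W₂ ≠ 0 := fun h => hW₁ne (by rw [← hswapW₂, h, map_zero])
  -- vanishing at the sample points
  have hvan : ∀ s : ℤ, MvPolynomial.eval ![z s, z (s + 1)] W₁ = 0 ∧
      MvPolynomial.eval ![z s, z (s + 1)] W₂ = 0 := by
    intro s
    constructor
    · rw [heval]; exact (hroot s).1
    · rw [heval₂]
      have h1 := (hroot (s + 1)).2
      rw [show s + 1 - 1 = s by ring] at h1
      exact h1
  -- part 1 via the core lemma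
  obtain ⟨h, hhu, hhne, hhf, hhg⟩ := auxCore (auxE2 W₁) (auxE2 W₂)
    (fun h => hW₁ne (by simpa using auxE2.injective (by rw [h, map_zero])))
    (fun h => hW₂ne (by simpa using auxE2.injective (by rw [h, map_zero])))
    (fun s => z s) (fun s => z (s + 1)) hz
    (by
      intro s
      rw [auxEv_auxE2, auxEv_auxE2]
      exact hvan s)
  have hpull : ∀ {p : Polynomial (Polynomial ℂ)} {W : MvPolynomial (Fin 2) ℂ},
      p ∣ auxE2 W → auxE2.symm p ∣ W := by
    intro p W hdvd
    have := map_dvd (auxE2.symm : Polynomial (Polynomial ℂ) →+* MvPolynomial (Fin 2) ℂ) hdvd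
    simpa using this
  have hmain : ∃ g : MvPolynomial (Fin 2) ℂ, ¬ IsUnit g ∧ g ≠ 0 ∧ g ∣ W₁ ∧ g ∣ W₂ := by
    refine ⟨auxE2.symm h, ?_, ?_, hpull hhf, hpull hhg⟩
    · intro hu
      apply hhu
      have := hu.map (auxE2 : MvPolynomial (Fin 2) ℂ →+* Polynomial (Polynomial ℂ))
      simpa using this
    · intro h0
      apply hhne
      have := congrArg (auxE2 : MvPolynomial (Fin 2) ℂ → Polynomial (Polynomial ℂ)) h0
      simpa using this
  refine ⟨hmain, ?_⟩
  -- part 2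
  intro hirr
  obtain ⟨g, hgu, hgne, hg1, hg2⟩ := hmain
  -- W₁ ∣ W₂
  obtain ⟨k, hk⟩ := hg1
  have hku : IsUnit k := (hirr.isUnit_or_isUnit hk).resolve_left hgu
  obtain ⟨ku, hku'⟩ := hku
  have hW₁dvdg : W₁ ∣ g := ⟨(ku⁻¹ : _), by rw [hk, ← hku', mul_assoc, Units.mul_inv, mul_one]⟩
  have hdvd12 : W₁ ∣ W₂ := hW₁dvdg.trans hg2
  have hdvd21 : W₂ ∣ W₁ := by
    have h6 := map_dvd (MvPolynomial.rename (⇑(Equiv.swap (0 : Fin 2) 1))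
      (R := ℂ)) hdvd12
    rwa [← hW₂, hswapW₂] at h6
  obtain ⟨u, hu⟩ := associated_of_dvd_dvd hdvd12 hdvd21
  -- the unit is a constant
  have huu : IsUnit (auxE2 (↑u : MvPolynomial (Fin 2) ℂ)) :=
    (Units.isUnit u).map (auxE2 : MvPolynomial (Fin 2) ℂ →+* Polynomial (Polynomial ℂ))
  obtain ⟨r, hru, hr⟩ := Polynomial.isUnit_iff.mp huu
  obtain ⟨c, hcu, hc⟩ := Polynomial.isUnit_iff.mp hru
  have huC : (↑u : MvPolynomial (Fin 2) ℂ) = MvPolynomial.C c := by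
    apply auxE2.injective
    rw [auxE2_C, ← hr, ← hc]
  rw [huC] at hu
  -- c * c = 1
  have hWW : W₁ = W₂ * MvPolynomial.C c := by
    have h7 := congrArg (MvPolynomial.rename (⇑(Equiv.swap (0 : Fin 2) 1))) hu
    rw [map_mul, MvPolynomial.rename_C, ← hW₂, hswapW₂] at h7
    exact h7.symm
  have hccc : c * c = 1 := by
    have h8 : W₁ * 1 = W₁ * (MvPolynomial.C c * MvPolynomial.C c) := by
      conv_lhs => rw [mul_one]
      conv_lhs => rw [hWW, ← hu]
      ring
    have h9 := mul_left_cancel₀ hW₁ne h8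
    have h10 : (MvPolynomial.C (c * c) : MvPolynomial (Fin 2) ℂ) = MvPolynomial.C (1 : ℂ) := by
      rw [map_mul, map_one, ← h9]
    exact MvPolynomial.C_injective (Fin 2) ℂ h10
  rcases mul_self_eq_one_iff.mp hccc with hc1 | hcm1
  · rw [← hu, hc1, map_one, mul_one]
  · -- antisymmetric case: (x - y) divides W₁, contradicting A₂ ≠ 0
    exfalso
    have hdiag : ∀ t : ℂ, A₂.eval t * t ^ 2 + A₁.eval t * t + A₀.eval t = 0 := by
      intro t
      have e1 : MvPolynomial.eval ![t, t] W₂ = MvPolynomial.eval ![t, t] W₁ := by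
        rw [heval₂, heval]
      have e2 : MvPolynomial.eval ![t, t] W₂ = - MvPolynomial.eval ![t, t] W₁ := by
        rw [← hu, hcm1, map_mul]
        simp
      have e3 := e1.symm.trans e2
      have e4 : MvPolynomial.eval ![t, t] W₁ = 0 := by
        linear_combination ((1 : ℂ) / 2) * e3
      rw [heval] at e4
      exact e4
    have hp0 : A₂ * Polynomial.X ^ 2 + A₁ * Polynomial.X + A₀ = 0 := by
      apply Polynomial.zero_of_eval_zero
      intro t
      simpa using hdiag t
    have hFroot : Polynomial.IsRoot F Polynomial.X := by
      rw [Polynomial.IsRoot, hFform]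
      simp only [Polynomial.eval_add, Polynomial.eval_mul, Polynomial.eval_pow,
        Polynomial.eval_C, Polynomial.eval_X]
      exact hp0
    have hdvdF : (Polynomial.X - Polynomial.C Polynomial.X) ∣ F :=
      Polynomial.dvd_iff_isRoot.mpr hFroot
    rw [hF] at hdvdF
    have hdW : auxE2.symm (Polynomial.X - Polynomial.C Polynomial.X) ∣ W₁ := hpull hdvdF
    obtain ⟨m, hm⟩ := hdW
    have hnotunit : ¬ IsUnit (auxE2.symm (Polynomial.X - Polynomial.C Polynomial.X)) := by
      intro hu'
      have h11 := hu'.map (auxE2 : MvPolynomial (Fin 2) ℂ →+* Polynomial (Polynomial ℂ))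
      simp only [RingHom.coe_coe, AlgEquiv.apply_symm_apply] at h11
      have h12 := Polynomial.degree_eq_zero_of_isUnit h11
      rw [Polynomial.degree_X_sub_C] at h12
      exact one_ne_zero h12
    have hmu : IsUnit m := (hirr.isUnit_or_isUnit hm).resolve_left hnotunit
    have hFm : F = (Polynomial.X - Polynomial.C Polynomial.X) * auxE2 m := by
      have := congrArg (auxE2 : MvPolynomial (Fin 2) ℂ → Polynomial (Polynomial ℂ)) hm
      rw [map_mul, AlgEquiv.apply_symm_apply] at this
      rw [hF, this]
    have hmdeg : (auxE2 m).degree = 0 := Polynomial.degree_eq_zero_of_isUnit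
      (by exact hmu.map (auxE2 : MvPolynomial (Fin 2) ℂ →+* Polynomial (Polynomial ℂ)))
    have hFdeg : F.degree = 1 := by
      rw [hFm, Polynomial.degree_mul, Polynomial.degree_X_sub_C, hmdeg]
      rfl
    have h2le : (2 : WithBot ℕ) ≤ F.degree :=
      Polynomial.le_degree_of_ne_zero (by rw [hFcoeff2]; exact hA₂)
    rw [hFdeg] at h2le
    exact absurd h2le (by decide)
end

section
/- Suppose R_n ∈ ℂ[X] has degree exactly n with leading coefficient ω_n ≠ 0 for all n ≥ 2, and R_{n+2}(x) = v(x)R_{n+1}(x) − u(x)R_n(x) for all n ≥ 2, where v(x) = −(α₂x² + α₄x + α₅)/(α₁x² + α₂x + α₃), u(x) = (α₃x² + α₅x + α₆)/(α₁x² + α₂x + α₃), as an identity of rational functions. Then α₁ = 0. -/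
open Polynomial in
/-- If `R n` has exact degree `n` (for `n ≥ 2`) and the recurrence
`R (n+2) = v * R (n+1) - u * R n` holds as an identity of rational functions,
where `v = -(α₂x² + α₄x + α₅)/(α₁x² + α₂x + α₃)` and
`u = (α₃x² + α₅x + α₆)/(α₁x² + α₂x + α₃)` (denominator not identically zero),
then `α₁ = 0`. -/
theorem stmt13 (R : ℕ → Polynomial ℂ)
    (hdeg : ∀ n : ℕ, 2 ≤ n → (R n).degree = n)
    (α₁ α₂ α₃ α₄ α₅ α₆ : ℂ)
    (hden : (C α₁ * X ^ 2 + C α₂ * X + C α₃ : Polynomial ℂ) ≠ 0)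
    (hrec : ∀ n : ℕ, 2 ≤ n →
      (C α₁ * X ^ 2 + C α₂ * X + C α₃) * R (n + 2)
        = -(C α₂ * X ^ 2 + C α₄ * X + C α₅) * R (n + 1)
          - (C α₃ * X ^ 2 + C α₅ * X + C α₆) * R n) :
    α₁ = 0 := by
  by_contra hα
  have hD : (C α₁ * X ^ 2 + C α₂ * X + C α₃ : Polynomial ℂ).degree = 2 :=
    degree_quadratic hα
  have h := hrec 2 le_rfl
  have hL : ((C α₁ * X ^ 2 + C α₂ * X + C α₃) * R 4).degree = 6 := by
    rw [degree_mul, hD, hdeg 4 (by norm_num)]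
    rfl
  have hR : ((-(C α₂ * X ^ 2 + C α₄ * X + C α₅) * R 3
      - (C α₃ * X ^ 2 + C α₅ * X + C α₆) * R 2) : Polynomial ℂ).degree ≤ 5 := by
    apply le_trans (degree_sub_le _ _)
    apply max_le
    · apply le_trans (degree_mul_le _ _)
      calc (-(C α₂ * X ^ 2 + C α₄ * X + C α₅) : Polynomial ℂ).degree + (R 3).degree
          ≤ 2 + 3 := by
            rw [hdeg 3 (by norm_num), degree_neg]
            exact add_le_add degree_quadratic_le le_rfl
        _ = 5 := rfl
    · apply le_trans (degree_mul_le _ _)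
      calc ((C α₃ * X ^ 2 + C α₅ * X + C α₆) : Polynomial ℂ).degree + (R 2).degree
          ≤ 2 + 2 := by
            rw [hdeg 2 le_rfl]
            exact add_le_add degree_quadratic_le le_rfl
        _ ≤ 5 := by norm_num
  simp only [show 2+2=4 from rfl, show 2+1=3 from rfl] at h
  rw [h] at hL
  rw [hL] at hR
  norm_num at hR
end

section
/- Under the hypotheses of the previous statement with α₁ = 0: if additionally α₂ ≠ 0, then the leading coefficients satisfy ω_{n+2} = −ω_{n+1} for all n ≥ 2, hence λ_{n+2} = λ_n where λ_n − λ_{n−1} = ω_n; i.e., the spectrum is degenerate. -/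
open Polynomial in
/-- With `α₁ = 0`: if moreover `α₂ ≠ 0`, then the leading coefficients
`ω n = λ n - λ (n-1)` of the `R n` satisfy `ω (n+2) = -ω (n+1)` for `n ≥ 2`,
hence `λ (n+2) = λ n` for `n ≥ 2`, i.e. the spectrum is degenerate. -/
theorem stmt14 (R : ℕ → Polynomial ℂ)
    (hdeg : ∀ n : ℕ, 2 ≤ n → (R n).degree = n)
    (ω lam : ℕ → ℂ)
    (hω : ∀ n : ℕ, 2 ≤ n → ω n = (R n).leadingCoeff)
    (hω0 : ∀ n : ℕ, 2 ≤ n → ω n ≠ 0)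
    (hlam : ∀ n : ℕ, 1 ≤ n → ω n = lam n - lam (n - 1))
    (α₂ α₃ α₄ α₅ α₆ : ℂ) (hα₂ : α₂ ≠ 0)
    (hden : (C α₂ * X + C α₃ : Polynomial ℂ) ≠ 0)
    (hrec : ∀ n : ℕ, 2 ≤ n →
      (C α₂ * X + C α₃) * R (n + 2)
        = -(C α₂ * X ^ 2 + C α₄ * X + C α₅) * R (n + 1)
          - (C α₃ * X ^ 2 + C α₅ * X + C α₆) * R n) :
    (∀ n : ℕ, 2 ≤ n → ω (n + 2) = -ω (n + 1)) ∧
    (∀ n : ℕ, 2 ≤ n → lam (n + 2) = lam n) := by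
  have key : ∀ n : ℕ, 2 ≤ n → ω (n + 2) = -ω (n + 1) := by
    intro n hn
    have hz : ∀ m k : ℕ, 2 ≤ m → m < k → (R m).coeff k = 0 := by
      intro m k hm hk
      apply Polynomial.coeff_eq_zero_of_degree_lt
      rw [hdeg m hm]
      exact_mod_cast hk
    have h := congrArg (fun p => Polynomial.coeff p (n + 3)) (hrec n hn)
    have e1 : ((C α₂ * X + C α₃) * R (n + 2)).coeff (n + 3)
        = α₂ * (R (n + 2)).coeff (n + 2) + α₃ * (R (n + 2)).coeff (n + 3) := by
      have e : (C α₂ * X + C α₃) * R (n + 2)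
          = C α₂ * (X * R (n + 2)) + C α₃ * R (n + 2) := by ring
      rw [e, coeff_add, coeff_C_mul, coeff_C_mul,
        show n + 3 = (n + 2) + 1 from rfl, coeff_X_mul]
    have e2 : (-(C α₂ * X ^ 2 + C α₄ * X + C α₅) * R (n + 1)
          - (C α₃ * X ^ 2 + C α₅ * X + C α₆) * R n).coeff (n + 3)
        = -(α₂ * (R (n + 1)).coeff (n + 1) + α₄ * (R (n + 1)).coeff (n + 2)
            + α₅ * (R (n + 1)).coeff (n + 3))
          - (α₃ * (R n).coeff (n + 1) + α₅ * (R n).coeff (n + 2)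
            + α₆ * (R n).coeff (n + 3)) := by
      have e : -(C α₂ * X ^ 2 + C α₄ * X + C α₅) * R (n + 1)
            - (C α₃ * X ^ 2 + C α₅ * X + C α₆) * R n
          = -(C α₂ * (X ^ 2 * R (n + 1)) + C α₄ * (X * R (n + 1)) + C α₅ * R (n + 1))
            - (C α₃ * (X ^ 2 * R n) + C α₅ * (X * R n) + C α₆ * R n) := by ring
      rw [e]
      rw [coeff_sub, coeff_neg, coeff_add, coeff_add, coeff_add, coeff_add,
        coeff_C_mul, coeff_C_mul, coeff_C_mul, coeff_C_mul, coeff_C_mul, coeff_C_mul,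
        show n + 3 = (n + 1) + 2 from rfl, coeff_X_pow_mul, coeff_X_pow_mul,
        show (n + 1) + 2 = (n + 2) + 1 from rfl, coeff_X_mul, coeff_X_mul]
    rw [e1, e2] at h
    rw [hz (n + 2) (n + 3) (by omega) (by omega), hz (n + 1) (n + 2) (by omega) (by omega),
      hz (n + 1) (n + 3) (by omega) (by omega), hz n (n + 1) hn (by omega),
      hz n (n + 2) hn (by omega), hz n (n + 3) hn (by omega)] at h
    have hl2 : (R (n + 2)).coeff (n + 2) = ω (n + 2) := by
      rw [hω (n + 2) (by omega), Polynomial.leadingCoeff,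
        Polynomial.natDegree_eq_of_degree_eq_some (hdeg (n + 2) (by omega))]
    have hl1 : (R (n + 1)).coeff (n + 1) = ω (n + 1) := by
      rw [hω (n + 1) (by omega), Polynomial.leadingCoeff,
        Polynomial.natDegree_eq_of_degree_eq_some (hdeg (n + 1) (by omega))]
    rw [hl1, hl2] at h
    have : α₂ * ω (n + 2) = α₂ * (-ω (n + 1)) := by ring_nf; ring_nf at h; linear_combination h
    exact mul_left_cancel₀ hα₂ this
  refine ⟨key, fun n hn => ?_⟩
  have h2 := hlam (n + 2) (by omega)
  have h1 := hlam (n + 1) (by omega)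
  rw [show n + 2 - 1 = n + 1 from rfl] at h2; rw [show n + 1 - 1 = n from rfl] at h1
  have hk := key n hn
  linear_combination hk - h2 - h1
end
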